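/- Let γ : ℝ≥0 → X be an almost-geodesic converging to a horofunction ξ, and let η be any horofunction. Then H(ξ,η) = lim_{t→∞} ( d(b,γ(t)) + η(γ(t)) ). In particular, H(ξ,ξ) = 0 for every Busemann point ξ. -/

import Mathlib

open Filter

/-- The detour cost `H(ξ,η)`, as an infimum over paths `γ : ℝ≥0 → X` converging to `ξ`
of `liminf_{t → ∞} (d b (γ t) + η (γ t))`, valued in `EReal`. -/
noncomputable def detourCostPath {X : Type*} (d : X → X → ℝ) (b : X) (ξ η : X → ℝ) :
    EReal :=
  sInf { c : EReal | ∃ γ : ℝ → X,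
    (∀ x, Filter.Tendsto (fun t => d x (γ t) - d b (γ t)) Filter.atTop (nhds (ξ x))) ∧
    c = Filter.liminf (fun t => ((d b (γ t) + η (γ t) : ℝ) : EReal)) Filter.atTop }

/-- A horofunction is 1-Lipschitz in the appropriate (nonsymmetric) sense. -/
lemma horo_lip {X : Type*} (d : X → X → ℝ) (b : X)
    (htri : ∀ x y z, d x z ≤ d x y + d y z) (η : X → ℝ) (γ' : ℝ → X)
    (hγ' : ∀ x, Filter.Tendsto (fun t => d x (γ' t) - d b (γ' t)) Filter.atTop (nhds (η x)))
    (x y : X) : η x ≤ d x y + η y := by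
  have h2 : Filter.Tendsto (fun t => d x y + (d y (γ' t) - d b (γ' t))) Filter.atTop
      (nhds (d x y + η y)) := tendsto_const_nhds.add (hγ' y)
  refine le_of_tendsto_of_tendsto (hγ' x) h2 (Filter.Eventually.of_forall fun t => ?_)
  have := htri x y (γ' t); simp only; linarith

/-- A horofunction vanishes at the basepoint. -/
lemma horo_zero {X : Type*} (d : X → X → ℝ) (b : X) (η : X → ℝ) (γ' : ℝ → X)
    (hγ' : ∀ x, Filter.Tendsto (fun t => d x (γ' t) - d b (γ' t)) Filter.atTop (nhds (η x))) :
    η b = 0 := by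
  have h0 : Filter.Tendsto (fun t : ℝ => d b (γ' t) - d b (γ' t)) Filter.atTop
      (nhds (0 : ℝ)) := by simpa using (tendsto_const_nhds : Filter.Tendsto (fun _ : ℝ => (0:ℝ)) _ _)
  exact (tendsto_nhds_unique (hγ' b) h0)

theorem detourCost_along_almost_geodesic {X : Type*} (d : X → X → ℝ) (b : X)
    (hpos : ∀ x y, 0 ≤ d x y) (hzero : ∀ x y, d x y = 0 ↔ x = y)
    (htri : ∀ x y z, d x z ≤ d x y + d y z)
    (γ : ℝ → X) (ξ η : X → ℝ)
    (hgeo : ∀ ε > (0:ℝ), ∃ T : ℝ, ∀ s t : ℝ, T ≤ s → s ≤ t →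
      |d (γ 0) (γ s) + d (γ s) (γ t) - t| < ε)
    (hconv : ∀ x, Filter.Tendsto (fun t => d x (γ t) - d b (γ t)) Filter.atTop
      (nhds (ξ x)))
    (hη : ∃ γ' : ℝ → X,
      ∀ x, Filter.Tendsto (fun t => d x (γ' t) - d b (γ' t)) Filter.atTop (nhds (η x))) :
    Filter.Tendsto (fun t => ((d b (γ t) + η (γ t) : ℝ) : EReal)) Filter.atTop
        (nhds (detourCostPath d b ξ η)) ∧
      detourCostPath d b ξ ξ = 0 := by
  obtain ⟨γ', hγ'⟩ := hη
  have lipη : ∀ x y, η x ≤ d x y + η y := horo_lip d b htri η γ' hγ'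
  have lipξ : ∀ x y, ξ x ≤ d x y + ξ y := horo_lip d b htri ξ γ hconv
  have ηb : η b = 0 := horo_zero d b η γ' hγ'
  have ξb : ξ b = 0 := horo_zero d b ξ γ hconv
  set f : ℝ → ℝ := fun t => d b (γ t) + η (γ t) with hfdef
  set g : ℝ → ℝ := fun t => d b (γ t) + ξ (γ t) with hgdef
  have hfnn : ∀ t, 0 ≤ f t := fun t => by have := lipη b (γ t); simp only [hfdef]; linarith
  have hgnn : ∀ t, 0 ≤ g t := fun t => by have := lipξ b (γ t); simp only [hgdef]; linarith
  clear_value f g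
  have hself : ∀ t, d (γ t) (γ t) = 0 := fun t => (hzero _ _).mpr rfl
  -- convergence of the base-point comparison along γ
  have hconv0 := hconv (γ 0)
  -- almost-monotonicity of f
  have halmost : ∀ ε > (0:ℝ), ∃ T : ℝ, ∀ s t : ℝ, T ≤ s → s ≤ t → f s ≤ f t + ε := by
    intro ε hε
    obtain ⟨T1, hT1⟩ := hgeo (ε/4) (by linarith)
    obtain ⟨T2, hT2⟩ := (Metric.tendsto_atTop.mp hconv0) (ε/4) (by linarith)
    refine ⟨max T1 T2, fun s t hs hst => ?_⟩
    have hs1 : T1 ≤ s := le_trans (le_max_left _ _) hs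
    have hs2 : T2 ≤ s := le_trans (le_max_right _ _) hs
    have hA := hT1 s t hs1 hst
    have hB := hT1 t t (le_trans hs1 hst) le_rfl
    rw [hself t] at hB
    have hC := hT2 s hs2
    have hD := hT2 t (le_trans hs2 hst)
    rw [Real.dist_eq] at hC hD
    rw [abs_lt] at hA hB hC hD
    have hlip := lipη (γ s) (γ t)
    simp only [hfdef]
    linarith [hA.2, hB.1, hC.1, hD.2]
  -- g tends to 0
  have hg0 : Filter.Tendsto g Filter.atTop (nhds 0) := by
    rw [Metric.tendsto_atTop]
    intro ε hε
    obtain ⟨T1, hT1⟩ := hgeo (ε/4) (by linarith)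
    obtain ⟨T2, hT2⟩ := (Metric.tendsto_atTop.mp hconv0) (ε/4) (by linarith)
    refine ⟨max T1 T2, fun s hs => ?_⟩
    have hs1 : T1 ≤ s := le_trans (le_max_left _ _) hs
    have hs2 : T2 ≤ s := le_trans (le_max_right _ _) hs
    -- ξ (γ s) ≤ ξ (γ 0) - d (γ 0) (γ s) + ε/2
    have hkey : ξ (γ s) ≤ ξ (γ 0) - d (γ 0) (γ s) + ε/2 := by
      have h2 : Filter.Tendsto
          (fun u => (d (γ 0) (γ u) - d b (γ u)) + (ε/2 - d (γ 0) (γ s)))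
          Filter.atTop (nhds (ξ (γ 0) + (ε/2 - d (γ 0) (γ s)))) :=
        hconv0.add tendsto_const_nhds
      have h3 : ξ (γ 0) + (ε/2 - d (γ 0) (γ s)) = ξ (γ 0) - d (γ 0) (γ s) + ε/2 := by ring
      rw [← h3]
      refine le_of_tendsto_of_tendsto (hconv (γ s)) h2 ?_
      filter_upwards [Filter.eventually_ge_atTop s] with u hu
      have hA := hT1 s u hs1 hu
      have hB := hT1 u u (le_trans hs1 hu) le_rfl
      rw [hself u] at hB
      rw [abs_lt] at hA hB
      linarith [hA.2, hB.1]
    have hC := hT2 s hs2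
    rw [Real.dist_eq, abs_lt] at hC
    have : g s < ε := by simp only [hgdef]; linarith [hC.1]
    rw [Real.dist_eq, sub_zero, abs_of_nonneg (hgnn s)]
    exact this
  -- key lower bound for any path σ converging to ξ
  have KEY : ∀ (ζ : X → ℝ), (∀ x y, ζ x ≤ d x y + ζ y) →
      ∀ (σ : ℝ → X),
      (∀ x, Filter.Tendsto (fun u => d x (σ u) - d b (σ u)) Filter.atTop (nhds (ξ x))) →
      ∀ t : ℝ, ((ζ (γ t) - ξ (γ t) : ℝ) : EReal) ≤
        Filter.liminf (fun u => ((d b (σ u) + ζ (σ u) : ℝ) : EReal)) Filter.atTop := by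
    intro ζ lipζ σ hσ t
    set lower : ℝ → ℝ := fun u => -(d (γ t) (σ u) - d b (σ u)) + ζ (γ t) with hldef
    have h1 : Filter.Tendsto lower Filter.atTop (nhds (-(ξ (γ t)) + ζ (γ t))) :=
      ((hσ (γ t)).neg).add tendsto_const_nhds
    have h2 : Filter.Tendsto (fun u => ((lower u : ℝ) : EReal)) Filter.atTop
        (nhds ((-(ξ (γ t)) + ζ (γ t) : ℝ) : EReal)) := EReal.tendsto_coe.mpr h1
    have h3 : Filter.liminf (fun u => ((lower u : ℝ) : EReal)) Filter.atTop
        = ((-(ξ (γ t)) + ζ (γ t) : ℝ) : EReal) := h2.liminf_eq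
    have h4 : Filter.liminf (fun u => ((lower u : ℝ) : EReal)) Filter.atTop ≤
        Filter.liminf (fun u => ((d b (σ u) + ζ (σ u) : ℝ) : EReal)) Filter.atTop := by
      refine Filter.liminf_le_liminf (Filter.Eventually.of_forall fun u => ?_)
      have := lipζ (γ t) (σ u)
      exact_mod_cast (by simp only [hldef]; linarith : lower u ≤ d b (σ u) + ζ (σ u))
    have h5 : (ζ (γ t) - ξ (γ t) : ℝ) = -(ξ (γ t)) + ζ (γ t) := by ring
    rw [h5, ← h3]
    exact h4
  -- main limit
  have hmain : ∃ L : EReal,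
      Filter.Tendsto (fun t => ((f t : ℝ) : EReal)) Filter.atTop (nhds L) ∧
      Filter.Tendsto (fun t => ((f t - g t : ℝ) : EReal)) Filter.atTop (nhds L) := by
    by_cases htop : Filter.Tendsto f Filter.atTop Filter.atTop
    · refine ⟨⊤, ?_, ?_⟩
      · rw [EReal.tendsto_nhds_top_iff_real]
        intro x
        filter_upwards [htop.eventually_ge_atTop (x + 1)] with t ht
        exact_mod_cast (by linarith : x < f t)
      · have hfg : Filter.Tendsto (fun t => f t - g t) Filter.atTop Filter.atTop := by
          have := (hg0.neg).add_atTop htop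
          refine this.congr fun t => by ring
        rw [EReal.tendsto_nhds_top_iff_real]
        intro x
        filter_upwards [hfg.eventually_ge_atTop (x + 1)] with t ht
        exact_mod_cast (by linarith : x < f t - g t)
    · -- f is bounded, converges to its liminf
      rw [Filter.tendsto_atTop] at htop
      push_neg at htop
      obtain ⟨M, hM⟩ := htop
      -- frequently f t < M
      have hM' : ∃ᶠ t in Filter.atTop, f t < M := hM
      obtain ⟨T1, hT1⟩ := halmost 1 one_pos
      have hub : ∀ s, T1 ≤ s → f s ≤ M + 1 := by
        intro s hs
        obtain ⟨t, hts, htM⟩ := (Filter.frequently_atTop.mp hM') s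
        have := hT1 s t hs hts
        linarith
      have hbdd_above : Filter.IsBoundedUnder (· ≤ ·) Filter.atTop f :=
        ⟨M + 1, Filter.eventually_map.mpr (Filter.eventually_atTop.mpr ⟨T1, hub⟩)⟩
      have hbdd_below : Filter.IsBoundedUnder (· ≥ ·) Filter.atTop f :=
        ⟨0, Filter.eventually_map.mpr (Filter.Eventually.of_forall hfnn)⟩
      set L : ℝ := Filter.liminf f Filter.atTop with hLdef
      clear_value L
      have hfL : Filter.Tendsto f Filter.atTop (nhds L) := by
        rw [Metric.tendsto_atTop]
        intro ε hε
        have hlow : ∀ᶠ t in Filter.atTop, L - ε/2 < f t :=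
          Filter.eventually_lt_of_lt_liminf (by linarith) hbdd_below
        have hfreq : ∃ᶠ t in Filter.atTop, f t < L + ε/2 :=
          Filter.frequently_lt_of_liminf_lt
            (hbdd_above.isCoboundedUnder_flip) (by linarith)
        obtain ⟨T2, hT2⟩ := halmost (ε/2) (by linarith)
        obtain ⟨T3, hT3⟩ := Filter.eventually_atTop.mp hlow
        refine ⟨max T2 T3, fun s hs => ?_⟩
        have hs2 : T2 ≤ s := le_trans (le_max_left _ _) hs
        have hs3 : T3 ≤ s := le_trans (le_max_right _ _) hs
        obtain ⟨t, hts, htL⟩ := (Filter.frequently_atTop.mp hfreq) s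
        have h1 : f s ≤ f t + ε/2 := hT2 s t hs2 hts
        have h2 : L - ε/2 < f s := hT3 s hs3
        rw [Real.dist_eq, abs_lt]
        constructor <;> linarith
      have hfgL : Filter.Tendsto (fun t => f t - g t) Filter.atTop (nhds L) := by
        have := hfL.sub hg0
        simpa using this
      exact ⟨(L : EReal), EReal.tendsto_coe.mpr hfL, EReal.tendsto_coe.mpr hfgL⟩
  obtain ⟨L, hFL, hfgL⟩ := hmain
  constructor
  · -- first conjunct
    have hmem : L ∈ { c : EReal | ∃ σ : ℝ → X,
        (∀ x, Filter.Tendsto (fun t => d x (σ t) - d b (σ t)) Filter.atTop (nhds (ξ x))) ∧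
        c = Filter.liminf (fun t => ((d b (σ t) + η (σ t) : ℝ) : EReal)) Filter.atTop } :=
      ⟨γ, hconv, by simpa only [hfdef] using hFL.liminf_eq.symm⟩
    have hlb : detourCostPath d b ξ η = L := by
      refine le_antisymm (sInf_le hmem) (le_sInf ?_)
      rintro c ⟨σ, hσ, rfl⟩
      refine le_of_tendsto hfgL (Filter.Eventually.of_forall fun t => ?_)
      have h5 : f t - g t = η (γ t) - ξ (γ t) := by simp only [hfdef, hgdef]; ring
      rw [h5]
      exact KEY η lipη σ hσ t
    rw [hlb]
    simpa only [hfdef] using hFL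
  · -- second conjunct : detour cost of ξ from itself is 0
    have hmem0 : (0 : EReal) ∈ { c : EReal | ∃ σ : ℝ → X,
        (∀ x, Filter.Tendsto (fun t => d x (σ t) - d b (σ t)) Filter.atTop (nhds (ξ x))) ∧
        c = Filter.liminf (fun t => ((d b (σ t) + ξ (σ t) : ℝ) : EReal)) Filter.atTop } := by
      refine ⟨γ, hconv, ?_⟩
      have : Filter.Tendsto (fun t => ((g t : ℝ) : EReal)) Filter.atTop
          (nhds ((0 : ℝ) : EReal)) := EReal.tendsto_coe.mpr hg0
      rw [EReal.coe_zero] at this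
      simpa only [hgdef] using this.liminf_eq.symm
    refine le_antisymm (sInf_le hmem0) (le_sInf ?_)
    rintro c ⟨σ, hσ, rfl⟩
    have h0 : ∀ u : ℝ, (0 : EReal) ≤ ((d b (σ u) + ξ (σ u) : ℝ) : EReal) := by
      intro u
      have := lipξ b (σ u)
      exact_mod_cast (by linarith : (0:ℝ) ≤ d b (σ u) + ξ (σ u))
    calc (0 : EReal) = Filter.liminf (fun _ : ℝ => (0 : EReal)) Filter.atTop :=
          (Filter.liminf_const 0).symm
      _ ≤ _ := Filter.liminf_le_liminf (Filter.Eventually.of_forall h0)
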